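/- Let each fᵢ: ℝ^d → ℝ be differentiable, convex and Lᵢ-smooth, assume the interpolation regime holds with common minimizer x⋆, and let γ > 0. Then for each i and all x ∈ ℝ^d: M_{fᵢ}^γ(x) − M_{fᵢ}^γ(x⋆) ≥ (1/(1+γLᵢ)) (fᵢ(x) − fᵢ(x⋆)). -/

import Mathlib

open InnerProductSpace Set Filter

section aux

variable {d : ℕ}

local notation "E" => EuclideanSpace ℝ (Fin d)
local notation "⟪" x ", " y "⟫" => @inner ℝ _ _ x y

lemma aux_deriv_line {f : E → ℝ} {g : E → E} (hg : ∀ x, HasGradientAt f (g x) x)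
    (x v : E) (t : ℝ) :
    HasDerivAt (fun s : ℝ => f (x + s • v)) ⟪g (x + t • v), v⟫ t := by
  have hc : HasDerivAt (fun s : ℝ => x + s • v) v t := by
    simpa using ((hasDerivAt_id t).smul_const v).const_add x
  have hf : HasFDerivAt f (toDual ℝ E (g (x + t • v))) (x + t • v) :=
    hasGradientAt_iff_hasFDerivAt.mp (hg (x + t • v))
  have h := hf.comp_hasDerivAt t hc
  simp at h
  exact h

/-- First-order condition for convexity. -/
lemma aux_convex_grad {f : E → ℝ} {g : E → E} (hconv : ConvexOn ℝ Set.univ f)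
    (hg : ∀ x, HasGradientAt f (g x) x) (x y : E) :
    f x + ⟪g x, y - x⟫ ≤ f y := by
  set v := y - x with hv
  set φ : ℝ → ℝ := fun s => f (x + s • v) with hφ
  have hD : HasDerivAt φ ⟪g x, v⟫ 0 := by
    simpa using aux_deriv_line hg x v 0
  have hslope : Tendsto (slope φ 0) (nhdsWithin 0 (Set.Ioi (0:ℝ)))
      (nhds ⟪g x, v⟫) :=
    (hasDerivAt_iff_tendsto_slope.mp hD).mono_left
      (nhdsWithin_mono 0 (fun t ht => ne_of_gt ht))
  have key : ⟪g x, v⟫ ≤ f y - f x := by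
    refine le_of_tendsto hslope (mem_of_superset (Ioc_mem_nhdsGT_of_mem ⟨le_refl 0, zero_lt_one⟩) ?_)
    intro t ht
    have hconvt : φ t ≤ (1 - t) * f x + t * f y := by
      have h2 := hconv.2 (mem_univ x) (mem_univ y) (by linarith [ht.2] : (0:ℝ) ≤ 1 - t)
        (le_of_lt ht.1) (by ring)
      have hxy : (1 - t) • x + t • y = x + t • v := by rw [hv]; module
      simpa [hφ, hxy] using h2
    have hφ0 : φ 0 = f x := by simp [hφ]
    simp only [mem_setOf_eq, slope_def_field, hφ0]
    rw [sub_zero, div_le_iff₀ ht.1]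
    nlinarith [ht.1, hconvt]
  linarith [key]

/-- Descent lemma. -/
lemma aux_descent {f : E → ℝ} {g : E → E} {L : ℝ} (hL : 0 < L)
    (hg : ∀ x, HasGradientAt f (g x) x)
    (hlip : ∀ x y, ‖g x - g y‖ ≤ L * ‖x - y‖) (x y : E) :
    f y ≤ f x + ⟪g x, y - x⟫ + L / 2 * ‖y - x‖ ^ 2 := by
  set v := y - x with hv
  set φ : ℝ → ℝ := fun s => f (x + s • v) with hφ
  set ψ : ℝ → ℝ := fun t => ⟪g (x + t • v), v⟫ with hψ
  have hD : ∀ t ∈ Set.uIcc (0:ℝ) 1, HasDerivAt φ (ψ t) t := fun t _ =>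
    aux_deriv_line hg x v t
  have hgc : Continuous g := by
    have : LipschitzWith (Real.toNNReal L) g := by
      intro a b
      rw [edist_nndist, edist_nndist, ← ENNReal.coe_mul, ENNReal.coe_le_coe,
        ← NNReal.coe_le_coe]
      push_cast
      calc (nndist (g a) (g b) : ℝ) = ‖g a - g b‖ := by rw [coe_nndist, dist_eq_norm]
        _ ≤ L * ‖a - b‖ := hlip a b
        _ ≤ Real.toNNReal L * dist a b := by
            rw [dist_eq_norm]
            gcongr
            exact Real.le_coe_toNNReal L
    exact this.continuous
  have hψc : Continuous ψ := by
    apply Continuous.inner (hgc.comp (by continuity)) continuous_const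
  have hint : φ 1 - φ 0 = ∫ t in (0:ℝ)..1, ψ t :=
    (intervalIntegral.integral_eq_sub_of_hasDerivAt hD
      (hψc.intervalIntegrable 0 1)).symm
  have hbound : ∀ t ∈ Set.Icc (0:ℝ) 1, ψ t ≤ ψ 0 + L * ‖v‖ ^ 2 * t := by
    intro t ht
    have h1 : ψ t - ψ 0 = ⟪g (x + t • v) - g (x + (0:ℝ) • v), v⟫ := by
      simp [hψ, inner_sub_left]
    have h2 : ⟪g (x + t • v) - g (x + (0:ℝ) • v), v⟫ ≤
        ‖g (x + t • v) - g (x + (0:ℝ) • v)‖ * ‖v‖ :=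
      real_inner_le_norm _ _
    have h3 : ‖g (x + t • v) - g (x + (0:ℝ) • v)‖ ≤ L * (t * ‖v‖) := by
      calc ‖g (x + t • v) - g (x + (0:ℝ) • v)‖ ≤ L * ‖(x + t • v) - (x + (0:ℝ) • v)‖ :=
            hlip _ _
        _ = L * (t * ‖v‖) := by
            rw [show (x + t • v) - (x + (0:ℝ) • v) = t • v by module,
              norm_smul, Real.norm_eq_abs, abs_of_nonneg ht.1]
    nlinarith [norm_nonneg v, ht.1, mul_le_mul_of_nonneg_right h3 (norm_nonneg v)]
  have hIle : (∫ t in (0:ℝ)..1, ψ t) ≤ ∫ t in (0:ℝ)..1, (ψ 0 + L * ‖v‖ ^ 2 * t) := by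
    apply intervalIntegral.integral_mono_on zero_le_one (hψc.intervalIntegrable 0 1)
      ((continuous_const.add (continuous_const.mul continuous_id')).intervalIntegrable 0 1)
    exact hbound
  have hIval : (∫ t in (0:ℝ)..1, (ψ 0 + L * ‖v‖ ^ 2 * t)) = ψ 0 + L * ‖v‖ ^ 2 / 2 := by
    rw [intervalIntegral.integral_add (f := fun _ => ψ 0) (g := fun t => L * ‖v‖ ^ 2 * t) (intervalIntegrable_const)
      ((continuous_const.mul continuous_id').intervalIntegrable 0 1),
      intervalIntegral.integral_const_mul, integral_id, intervalIntegral.integral_const]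
    simp only [smul_eq_mul]
    ring
  have hφ0 : φ 0 = f x := by simp [hφ]
  have hφ1 : φ 1 = f y := by simp [hφ, hv]
  have hψ0 : ψ 0 = ⟪g x, y - x⟫ := by simp [hψ, hv]
  rw [← hφ1, ← hφ0, ← hψ0]
  have : φ 1 - φ 0 ≤ ψ 0 + L * ‖v‖ ^ 2 / 2 := by
    rw [hint]; rw [← hIval]; exact hIle
  have hvv : ‖y - x‖ = ‖v‖ := by rw [hv]
  rw [hvv]
  linarith

end aux

/-- The Moreau envelope of a real-valued function `f` with parameter `γ`. -/
noncomputable def moreau {d : ℕ} (γ : ℝ) (f : EuclideanSpace ℝ (Fin d) → ℝ)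
    (x : EuclideanSpace ℝ (Fin d)) : ℝ :=
  ⨅ z, (f z + (1 / (2 * γ)) * ‖z - x‖ ^ 2)

/-- Let each `fᵢ : ℝ^d → ℝ` be differentiable, convex and `Lᵢ`-smooth, assume the
interpolation regime holds with common minimizer `x⋆` (`∇fᵢ(x⋆) = 0` for all `i`), and let
`γ > 0`. Then for each `i` and all `x`:
`M_{fᵢ}^γ(x) − M_{fᵢ}^γ(x⋆) ≥ (1/(1+γLᵢ)) (fᵢ(x) − fᵢ(x⋆))`. -/
theorem stmt10 {d n : ℕ} (γ : ℝ) (hγ : 0 < γ)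
    (f : Fin n → EuclideanSpace ℝ (Fin d) → ℝ)
    (g : Fin n → EuclideanSpace ℝ (Fin d) → EuclideanSpace ℝ (Fin d))
    (L : Fin n → ℝ) (hL : ∀ i, 0 < L i)
    (hconv : ∀ i, ConvexOn ℝ Set.univ (f i))
    (hgrad : ∀ i x, HasGradientAt (f i) (g i x) x)
    (hlip : ∀ i x y, ‖g i x - g i y‖ ≤ L i * ‖x - y‖)
    (xs : EuclideanSpace ℝ (Fin d)) (hint : ∀ i, g i xs = 0) :
    ∀ i, ∀ x, moreau γ (f i) x - moreau γ (f i) xs ≥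
      (1 / (1 + γ * L i)) * (f i x - f i xs) := by
  intro i x
  set A := f i with hA
  set G := g i with hG
  set Li := L i with hLi
  have hLpos := hL i
  have hfo := aux_convex_grad (hconv i) (hgrad i)
  -- xs is a global minimizer
  have hmin : ∀ z, A xs ≤ A z := by
    intro z
    have := hfo xs z
    rw [hint i] at this
    simpa using this
  -- f z - f xs ≥ ‖G z‖²/(2 L)
  have hPL : ∀ z, A xs + ‖G z‖ ^ 2 / (2 * Li) ≤ A z := by
    intro z
    have hd := aux_descent hLpos (hgrad i) (hlip i) z (z - (1 / Li) • G z)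
    have h1 : A xs ≤ A (z - (1 / Li) • G z) := hmin _
    have h2 : (inner ℝ (G z) ((z - (1 / Li) • G z) - z) : ℝ) = -(1 / Li) * ‖G z‖ ^ 2 := by
      rw [show (z - (1 / Li) • G z) - z = (-(1 / Li)) • G z by module,
        real_inner_smul_right, real_inner_self_eq_norm_sq]
    have h3 : ‖(z - (1 / Li) • G z) - z‖ ^ 2 = (1 / Li) ^ 2 * ‖G z‖ ^ 2 := by
      rw [show (z - (1 / Li) • G z) - z = (-(1 / Li)) • G z by module, norm_smul]
      simp [mul_pow]
    rw [h2, h3] at hd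
    have heq : -(1 / Li) * ‖G z‖ ^ 2 + Li / 2 * ((1 / Li) ^ 2 * ‖G z‖ ^ 2)
        = -(‖G z‖ ^ 2 / (2 * Li)) := by
      field_simp
      ring
    linarith
  -- moreau at xs equals A xs
  have hbdd : BddBelow (Set.range fun z => A z + 1 / (2 * γ) * ‖z - xs‖ ^ 2) := by
    refine ⟨A xs, ?_⟩
    rintro _ ⟨z, rfl⟩
    have : 0 ≤ 1 / (2 * γ) * ‖z - xs‖ ^ 2 := by positivity
    linarith [hmin z]
  have hMxs : moreau γ A xs = A xs := by
    apply le_antisymm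
    · have h := ciInf_le hbdd xs
      exact le_trans h (le_of_eq (by simp))
    · show A xs ≤ ⨅ z, (A z + 1 / (2 * γ) * ‖z - xs‖ ^ 2)
      apply le_ciInf
      intro z
      have : 0 ≤ 1 / (2 * γ) * ‖z - xs‖ ^ 2 := by positivity
      linarith [hmin z]
  -- moreau at x lower bound
  have hMx : A xs + 1 / (1 + γ * Li) * (A x - A xs) ≤ moreau γ A x := by
    show A xs + 1 / (1 + γ * Li) * (A x - A xs) ≤ ⨅ z, (A z + 1 / (2 * γ) * ‖z - x‖ ^ 2)
    apply le_ciInf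
    intro z
    have h1 : A x ≤ A z + ‖G z‖ * ‖z - x‖ + Li / 2 * ‖z - x‖ ^ 2 := by
      have hsm := aux_descent hLpos (hgrad i) (hlip i) z x
      rw [← hA, ← hG, ← hLi] at hsm
      have hcs : (inner ℝ (G z) (x - z) : ℝ) ≤ ‖G z‖ * ‖x - z‖ := real_inner_le_norm _ _
      rw [norm_sub_rev] at hcs
      rw [norm_sub_rev x z] at hsm
      linarith
    have h2 := hPL z
    set a := ‖G z‖
    set r := ‖z - x‖
    have ha : 0 ≤ a := norm_nonneg _
    have hr : 0 ≤ r := norm_nonneg _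
    have hs : (0:ℝ) < 1 + γ * Li := by nlinarith
    set D := A z - A xs with hD'
    set Δ := A x - A xs with hΔ'
    have e1 : Δ ≤ D + a * r + Li / 2 * r ^ 2 := by
      rw [hD', hΔ']
      linarith
    have e2 : a ^ 2 ≤ D * (2 * Li) := by
      have h2' : a ^ 2 / (2 * Li) ≤ D := by
        rw [hD']
        linarith
      exact (div_le_iff₀ (by positivity : (0:ℝ) < 2 * Li)).mp h2'
    have key2 : Δ * (2 * γ) ≤ (D * (2 * γ) + r ^ 2) * (1 + γ * Li) := by
      have t1 := mul_le_mul_of_nonneg_left e1 (by positivity : (0:ℝ) ≤ 2 * γ)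
      have t2 := mul_le_mul_of_nonneg_left e2 (sq_nonneg γ)
      have t3 := sq_nonneg (r - γ * a)
      have t4 : 0 ≤ γ * Li * r ^ 2 := by positivity
      nlinarith [t1, t2, t3, t4]
    have key : 1 / (1 + γ * Li) * Δ ≤ D + 1 / (2 * γ) * r ^ 2 := by
      rw [div_mul_eq_mul_div, div_le_iff₀ hs,
        show D + 1 / (2 * γ) * r ^ 2 = (D * (2 * γ) + r ^ 2) / (2 * γ) by
          field_simp,
        div_mul_eq_mul_div, le_div_iff₀ (by positivity : (0:ℝ) < 2 * γ)]
      linarith [key2]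
    rw [hD', hΔ'] at key
    linarith
  rw [hMxs]
  linarith [hMx]
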